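/- Let Γ_m be the group with presentation ⟨a, b ∣ a² = b², a^{4m} = b^{4m} = (ab)^m = (ba)^m = 1⟩ for m ≥ 2. Then Γ_m has order 4m². -/

import Mathlib

/-- The defining relations of `Γ_m = ⟨a, b ∣ a² = b², a^{4m} = b^{4m} = (ab)^m = (ba)^m = 1⟩`,
as elements of the free group on two generators `a = of 0`, `b = of 1`. -/
def gammaRels (m : ℕ) : Set (FreeGroup (Fin 2)) :=
  {FreeGroup.of 0 ^ 2 * (FreeGroup.of 1 ^ 2)⁻¹,
   FreeGroup.of 0 ^ (4 * m), FreeGroup.of 1 ^ (4 * m),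
   (FreeGroup.of 0 * FreeGroup.of 1) ^ m, (FreeGroup.of 1 * FreeGroup.of 0) ^ m}

/-! ### Auxiliary permutations (a faithful model of `Γ_m` acting on `ZMod (2m) × Bool`) -/

/-- The image of the generator `a`. -/
def gpa (m : ℕ) : Equiv.Perm (ZMod (2 * m) × Bool) where
  toFun q := (q.1 + if q.2 then 0 else 1, !q.2)
  invFun q := (q.1 - if q.2 then 1 else 0, !q.2)
  left_inv := by rintro ⟨t, b⟩; cases b <;> simp
  right_inv := by rintro ⟨t, b⟩; cases b <;> simp

/-- The image of the generator `b`. -/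
def gpb (m : ℕ) : Equiv.Perm (ZMod (2 * m) × Bool) where
  toFun q := (q.1 + if q.2 then 1 else 0, !q.2)
  invFun q := (q.1 - if q.2 then 0 else 1, !q.2)
  left_inv := by rintro ⟨t, b⟩; cases b <;> simp
  right_inv := by rintro ⟨t, b⟩; cases b <;> simp

/-- The image of `z = a²`. -/
def gpz (m : ℕ) : Equiv.Perm (ZMod (2 * m) × Bool) where
  toFun q := (q.1 + 1, q.2)
  invFun q := (q.1 - 1, q.2)
  left_inv := by rintro ⟨t, b⟩; simp
  right_inv := by rintro ⟨t, b⟩; simp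

/-- The image of `x = a*b`. -/
def gpx (m : ℕ) : Equiv.Perm (ZMod (2 * m) × Bool) where
  toFun q := (q.1 + if q.2 then 2 else 0, q.2)
  invFun q := (q.1 - if q.2 then 2 else 0, q.2)
  left_inv := by rintro ⟨t, b⟩; cases b <;> simp
  right_inv := by rintro ⟨t, b⟩; cases b <;> simp

/-- The image of `y = b*a`. -/
def gpy (m : ℕ) : Equiv.Perm (ZMod (2 * m) × Bool) where
  toFun q := (q.1 + if q.2 then 0 else 2, q.2)
  invFun q := (q.1 - if q.2 then 0 else 2, q.2)
  left_inv := by rintro ⟨t, b⟩; cases b <;> simp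
  right_inv := by rintro ⟨t, b⟩; cases b <;> simp

lemma gpa_mul_gpa (m : ℕ) : gpa m * gpa m = gpz m := by
  ext ⟨t, b⟩ <;> cases b <;> simp [gpa, gpz, Equiv.Perm.mul_apply]

lemma gpb_mul_gpb (m : ℕ) : gpb m * gpb m = gpz m := by
  ext ⟨t, b⟩ <;> cases b <;> simp [gpb, gpz, Equiv.Perm.mul_apply]

lemma gpa_mul_gpb (m : ℕ) : gpa m * gpb m = gpx m := by
  ext ⟨t, b⟩ <;> cases b <;> simp [gpa, gpb, gpx, Equiv.Perm.mul_apply] <;> ring_nf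

lemma gpb_mul_gpa (m : ℕ) : gpb m * gpa m = gpy m := by
  ext ⟨t, b⟩ <;> cases b <;> simp [gpa, gpb, gpy, Equiv.Perm.mul_apply] <;> ring_nf

lemma gpz_pow (m n : ℕ) : ∀ q : ZMod (2 * m) × Bool,
    (gpz m ^ n) q = (q.1 + (n : ZMod (2 * m)), q.2) := by
  induction n with
  | zero => intro q; simp
  | succ n ih =>
    intro q
    rw [pow_succ, Equiv.Perm.mul_apply, ih]
    simp only [gpz, Equiv.coe_fn_mk, Prod.mk.injEq]
    exact ⟨by push_cast; ring, trivial⟩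

lemma gpx_pow (m n : ℕ) : ∀ q : ZMod (2 * m) × Bool,
    (gpx m ^ n) q = (q.1 + if q.2 then ((2 * n : ℕ) : ZMod (2 * m)) else 0, q.2) := by
  induction n with
  | zero => intro q; simp
  | succ n ih =>
    rintro ⟨t, b⟩
    rw [pow_succ, Equiv.Perm.mul_apply, ih]
    cases b <;> simp [gpx] <;> push_cast <;> ring

lemma gpy_pow (m n : ℕ) : ∀ q : ZMod (2 * m) × Bool,
    (gpy m ^ n) q = (q.1 + if q.2 then 0 else ((2 * n : ℕ) : ZMod (2 * m)), q.2) := by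
  induction n with
  | zero => intro q; simp
  | succ n ih =>
    rintro ⟨t, b⟩
    rw [pow_succ, Equiv.Perm.mul_apply, ih]
    cases b <;> simp [gpy] <;> push_cast <;> ring

lemma gpz_pow_eq_one (m : ℕ) : gpz m ^ (2 * m) = 1 := by
  ext q <;> simp [gpz_pow]

lemma gpx_pow_eq_one (m : ℕ) : gpx m ^ m = 1 := by
  ext ⟨t, b⟩ <;> cases b <;> simp [gpx_pow, ZMod.natCast_self]

lemma gpy_pow_eq_one (m : ℕ) : gpy m ^ m = 1 := by
  ext ⟨t, b⟩ <;> cases b <;> simp [gpy_pow, ZMod.natCast_self]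

/-! ### Elements of the presented group -/

/-- The generator `a` in `Γ_m`. -/
def gA (m : ℕ) : PresentedGroup (gammaRels m) := PresentedGroup.of 0

/-- The generator `b` in `Γ_m`. -/
def gB (m : ℕ) : PresentedGroup (gammaRels m) := PresentedGroup.of 1

/-- `x = a*b` in `Γ_m`. -/
def gX (m : ℕ) : PresentedGroup (gammaRels m) := gA m * gB m

/-- `z = a²` in `Γ_m`. -/
def gZ (m : ℕ) : PresentedGroup (gammaRels m) := gA m ^ 2

lemma grel (m : ℕ) {r : FreeGroup (Fin 2)} (hr : r ∈ gammaRels m) :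
    PresentedGroup.mk (gammaRels m) r = 1 :=
  (QuotientGroup.eq_one_iff r).mpr (Subgroup.subset_normalClosure hr)

lemma gA_sq (m : ℕ) : gA m ^ 2 = gB m ^ 2 := by
  have h := grel m (show FreeGroup.of 0 ^ 2 * (FreeGroup.of 1 ^ 2)⁻¹ ∈ gammaRels m by
    simp [gammaRels])
  rw [map_mul, map_inv, map_pow, map_pow] at h
  exact mul_inv_eq_one.mp h

lemma gA_pow (m : ℕ) : gA m ^ (4 * m) = 1 := by
  have h := grel m (show FreeGroup.of 0 ^ (4 * m) ∈ gammaRels m by simp [gammaRels])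
  rw [map_pow] at h
  exact h

lemma gX_pow (m : ℕ) : gX m ^ m = 1 := by
  have h := grel m (show (FreeGroup.of 0 * FreeGroup.of 1) ^ m ∈ gammaRels m by
    simp [gammaRels])
  rw [map_pow, map_mul] at h
  exact h

lemma gZ_pow (m : ℕ) : gZ m ^ (2 * m) = 1 := by
  rw [gZ, ← pow_mul, show 2 * (2 * m) = 4 * m by ring]
  exact gA_pow m

lemma gZA_comm (m : ℕ) : Commute (gZ m) (gA m) := (Commute.refl (gA m)).pow_left 2

lemma gZX_comm (m : ℕ) : Commute (gZ m) (gX m) := by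
  have hB : Commute (gZ m) (gB m) := by
    rw [show gZ m = gB m ^ 2 from gA_sq m]
    exact (Commute.refl (gB m)).pow_left 2
  exact (gZA_comm m).mul_right hB

lemma gX_pow_pred (m : ℕ) (hm : 1 ≤ m) : gX m ^ (m - 1) = (gX m)⁻¹ := by
  have h : gX m ^ (m - 1) * gX m = 1 := by
    rw [← pow_succ, Nat.sub_add_cancel hm]
    exact gX_pow m
  exact eq_inv_of_mul_eq_one_left h

lemma gZ_pow_pred (m : ℕ) (hm : 1 ≤ m) : gZ m ^ (2 * m - 1) = (gZ m)⁻¹ := by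
  have h : gZ m ^ (2 * m - 1) * gZ m = 1 := by
    rw [← pow_succ, Nat.sub_add_cancel (by omega)]
    exact gZ_pow m
  exact eq_inv_of_mul_eq_one_left h

lemma gAX (m : ℕ) (hm : 1 ≤ m) :
    gA m * gX m = gX m ^ (m - 1) * gZ m ^ 2 * gA m := by
  rw [gX_pow_pred m hm]
  calc gA m * gX m = gA m ^ 2 * gB m := by rw [gX, pow_two, mul_assoc]
    _ = gB m ^ 2 * gB m := by rw [gA_sq]
    _ = (gB m)⁻¹ * (gB m ^ 2 * gB m ^ 2) := by rw [pow_two]; group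
    _ = (gB m)⁻¹ * (gA m ^ 2 * gA m ^ 2) := by rw [gA_sq]
    _ = (gX m)⁻¹ * gZ m ^ 2 * gA m := by rw [gX, gZ, pow_two, pow_two]; group

lemma form_mul_form (m : ℕ) (i j k l : ℕ) :
    (gX m ^ i * gZ m ^ j) * (gX m ^ k * gZ m ^ l) = gX m ^ (i + k) * gZ m ^ (j + l) := by
  have h : gZ m ^ j * gX m ^ k = gX m ^ k * gZ m ^ j := ((gZX_comm m).pow_pow j k).eq
  calc (gX m ^ i * gZ m ^ j) * (gX m ^ k * gZ m ^ l)
      = gX m ^ i * ((gZ m ^ j * gX m ^ k) * gZ m ^ l) := by group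
    _ = gX m ^ i * ((gX m ^ k * gZ m ^ j) * gZ m ^ l) := by rw [h]
    _ = (gX m ^ i * gX m ^ k) * (gZ m ^ j * gZ m ^ l) := by group
    _ = gX m ^ (i + k) * gZ m ^ (j + l) := by rw [← pow_add, ← pow_add]

lemma gAXpow (m : ℕ) (hm : 1 ≤ m) (k : ℕ) :
    gA m * gX m ^ k = gX m ^ ((m - 1) * k) * gZ m ^ (2 * k) * gA m := by
  induction k with
  | zero => simp
  | succ k ih =>
    calc gA m * gX m ^ (k + 1) = (gA m * gX m) * gX m ^ k := by
          rw [pow_succ']; group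
      _ = (gX m ^ (m - 1) * gZ m ^ 2) * (gA m * gX m ^ k) := by
          rw [gAX m hm, mul_assoc]
      _ = (gX m ^ (m - 1) * gZ m ^ 2) * (gX m ^ ((m - 1) * k) * gZ m ^ (2 * k) * gA m) := by
          rw [ih]
      _ = ((gX m ^ (m - 1) * gZ m ^ 2) * (gX m ^ ((m - 1) * k) * gZ m ^ (2 * k))) * gA m := by
          simp only [mul_assoc]
      _ = gX m ^ ((m - 1) + (m - 1) * k) * gZ m ^ (2 + 2 * k) * gA m := by
          rw [form_mul_form]
      _ = gX m ^ ((m - 1) * (k + 1)) * gZ m ^ (2 * (k + 1)) * gA m := by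
          rw [show (m - 1) + (m - 1) * k = (m - 1) * (k + 1) by ring,
            show 2 + 2 * k = 2 * (k + 1) by ring]

lemma gA_zpow_comm (m : ℕ) (l : ℕ) : gA m * gZ m ^ l = gZ m ^ l * gA m :=
  (((gZA_comm m).pow_left l).eq).symm

lemma form_mul_A (m : ℕ) (hm : 1 ≤ m) (i j k l : ℕ) :
    (gX m ^ i * gZ m ^ j * gA m) * (gX m ^ k * gZ m ^ l) =
      gX m ^ (i + (m - 1) * k) * gZ m ^ (j + (2 * k + l)) * gA m := by
  calc (gX m ^ i * gZ m ^ j * gA m) * (gX m ^ k * gZ m ^ l)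
      = (gX m ^ i * gZ m ^ j) * ((gA m * gX m ^ k) * gZ m ^ l) := by group
    _ = (gX m ^ i * gZ m ^ j) * ((gX m ^ ((m - 1) * k) * gZ m ^ (2 * k) * gA m) * gZ m ^ l) := by
        rw [gAXpow m hm]
    _ = (gX m ^ i * gZ m ^ j) * ((gX m ^ ((m - 1) * k) * gZ m ^ (2 * k)) * (gA m * gZ m ^ l)) := by
        group
    _ = (gX m ^ i * gZ m ^ j) * ((gX m ^ ((m - 1) * k) * gZ m ^ (2 * k)) * (gZ m ^ l * gA m)) := by
        rw [gA_zpow_comm]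
    _ = ((gX m ^ i * gZ m ^ j) * (gX m ^ ((m - 1) * k) * (gZ m ^ (2 * k) * gZ m ^ l))) * gA m := by
        group
    _ = ((gX m ^ i * gZ m ^ j) * (gX m ^ ((m - 1) * k) * gZ m ^ (2 * k + l))) * gA m := by
        rw [← pow_add]
    _ = gX m ^ (i + (m - 1) * k) * gZ m ^ (j + (2 * k + l)) * gA m := by
        rw [form_mul_form]

/-- Normal form predicate: every element of `Γ_m` is `x^i z^j` or `x^i z^j a`. -/
def gammaNF (m : ℕ) (g : PresentedGroup (gammaRels m)) : Prop :=
  ∃ i j : ℕ, g = gX m ^ i * gZ m ^ j ∨ g = gX m ^ i * gZ m ^ j * gA m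

lemma gammaNF_all (m : ℕ) (hm : 1 ≤ m) (g : PresentedGroup (gammaRels m)) : gammaNF m g := by
  induction g using PresentedGroup.induction_on with
  | H z =>
    induction z using FreeGroup.induction_on with
    | C1 =>
      exact ⟨0, 0, Or.inl (by simp [map_one])⟩
    | of x =>
      have hA : gammaNF m (gA m) := ⟨0, 0, Or.inr (by simp)⟩
      have hB : gammaNF m (gB m) := by
        refine ⟨m - 1, 1, Or.inr ?_⟩
        rw [gX_pow_pred m hm, pow_one]
        calc gB m = (gB m)⁻¹ * gB m ^ 2 := by group
          _ = (gB m)⁻¹ * gA m ^ 2 := by rw [gA_sq]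
          _ = (gX m)⁻¹ * gZ m * gA m := by rw [gX, gZ]; group
      fin_cases x
      · exact hA
      · exact hB
    | inv_of x _ =>
      have hAi : gammaNF m (gA m)⁻¹ := by
        refine ⟨0, 2 * m - 1, Or.inr ?_⟩
        rw [gZ_pow_pred m hm, gZ]
        group
      have hBi : gammaNF m (gB m)⁻¹ := by
        refine ⟨m - 1, 0, Or.inr ?_⟩
        rw [gX_pow_pred m hm, gX]
        group
      have hmap : ∀ y : FreeGroup (Fin 2),
          PresentedGroup.mk (gammaRels m) y⁻¹ = (PresentedGroup.mk (gammaRels m) y)⁻¹ :=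
        fun y => map_inv _ y
      fin_cases x
      · rw [hmap]; exact hAi
      · rw [hmap]; exact hBi
    | mul x y hx hy =>
      rw [map_mul]
      obtain ⟨i, j, hx⟩ := hx
      obtain ⟨k, l, hy⟩ := hy
      rcases hx with hx | hx <;> rcases hy with hy | hy <;> rw [hx, hy]
      · exact ⟨i + k, j + l, Or.inl (form_mul_form m i j k l)⟩
      · refine ⟨i + k, j + l, Or.inr ?_⟩
        rw [← mul_assoc, form_mul_form]
      · refine ⟨i + (m - 1) * k, j + (2 * k + l), Or.inr ?_⟩
        rw [form_mul_A m hm]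
      · refine ⟨i + (m - 1) * k, j + (2 * k + l) + 1, Or.inl ?_⟩
        have h1 : (gX m ^ i * gZ m ^ j * gA m) * (gX m ^ k * gZ m ^ l * gA m) =
            ((gX m ^ i * gZ m ^ j * gA m) * (gX m ^ k * gZ m ^ l)) * gA m := by group
        have h2 : gA m * gA m = gZ m := by rw [gZ, pow_two]
        rw [h1, form_mul_A m hm, mul_assoc, mul_assoc, h2, ← pow_succ]

/-- The normal form map. -/
def gF (m : ℕ) : Fin m × Fin (2 * m) × Fin 2 → PresentedGroup (gammaRels m) :=
  fun p => gX m ^ (p.1 : ℕ) * gZ m ^ (p.2.1 : ℕ) * gA m ^ (p.2.2 : ℕ)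

/-- The group `Γ_m` has order `4m²`. -/
theorem stmt_4 (m : ℕ) (hm : 2 ≤ m) :
    Nat.card (PresentedGroup (gammaRels m)) = 4 * m ^ 2 := by
  have hm1 : 1 ≤ m := by omega
  -- Surjectivity of the normal form map
  have hsurj : Function.Surjective (gF m) := by
    intro g
    obtain ⟨i, j, hg⟩ := gammaNF_all m hm1 g
    rcases hg with hg | hg
    · refine ⟨⟨⟨i % m, Nat.mod_lt _ (by omega)⟩, ⟨j % (2 * m), Nat.mod_lt _ (by omega)⟩, 0⟩, ?_⟩
      simp only [gF]
      rw [hg, ← pow_eq_pow_mod i (gX_pow m), ← pow_eq_pow_mod j (gZ_pow m)]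
      simp
    · refine ⟨⟨⟨i % m, Nat.mod_lt _ (by omega)⟩, ⟨j % (2 * m), Nat.mod_lt _ (by omega)⟩, 1⟩, ?_⟩
      simp only [gF]
      rw [hg, ← pow_eq_pow_mod i (gX_pow m), ← pow_eq_pow_mod j (gZ_pow m)]
      simp
  -- The permutation representation
  let f : Fin 2 → Equiv.Perm (ZMod (2 * m) × Bool) := ![gpa m, gpb m]
  have hf : ∀ r ∈ gammaRels m, FreeGroup.lift f r = 1 := by
    intro r hr
    have hfa : f 0 = gpa m := rfl
    have hfb : f 1 = gpb m := rfl
    simp only [gammaRels, Set.mem_insert_iff, Set.mem_singleton_iff] at hr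
    rcases hr with rfl | rfl | rfl | rfl | rfl
    · rw [map_mul, map_inv, map_pow, map_pow, FreeGroup.lift_apply_of, FreeGroup.lift_apply_of, hfa, hfb]
      rw [mul_inv_eq_one, pow_two, pow_two, gpa_mul_gpa, gpb_mul_gpb]
    · rw [map_pow, FreeGroup.lift_apply_of, hfa, show 4 * m = 2 * (2 * m) by ring, pow_mul,
        pow_two, gpa_mul_gpa]
      exact gpz_pow_eq_one m
    · rw [map_pow, FreeGroup.lift_apply_of, hfb, show 4 * m = 2 * (2 * m) by ring, pow_mul,
        pow_two, gpb_mul_gpb]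
      exact gpz_pow_eq_one m
    · rw [map_pow, map_mul, FreeGroup.lift_apply_of, FreeGroup.lift_apply_of, hfa, hfb, gpa_mul_gpb]
      exact gpx_pow_eq_one m
    · rw [map_pow, map_mul, FreeGroup.lift_apply_of, FreeGroup.lift_apply_of, hfa, hfb, gpb_mul_gpa]
      exact gpy_pow_eq_one m
  let φ := PresentedGroup.toGroup hf
  have hφA : φ (gA m) = gpa m := PresentedGroup.toGroup.of hf
  have hφB : φ (gB m) = gpb m := PresentedGroup.toGroup.of hf
  have hφX : φ (gX m) = gpx m := by rw [gX, map_mul, hφA, hφB, gpa_mul_gpb]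
  have hφZ : φ (gZ m) = gpz m := by rw [gZ, map_pow, hφA, pow_two, gpa_mul_gpa]
  have hkey : ∀ i j e : ℕ, φ (gX m ^ i * gZ m ^ j * gA m ^ e) =
      gpx m ^ i * gpz m ^ j * gpa m ^ e := by
    intro i j e
    rw [map_mul, map_mul, map_pow, map_pow, map_pow, hφX, hφZ, hφA]
  -- Injectivity
  have hinj : Function.Injective (gF m) := by
    rintro ⟨i, j, e⟩ ⟨i', j', e'⟩ h
    have h2 : gpx m ^ (i : ℕ) * gpz m ^ (j : ℕ) * gpa m ^ (e : ℕ) =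
        gpx m ^ (i' : ℕ) * gpz m ^ (j' : ℕ) * gpa m ^ (e' : ℕ) := by
      have := congrArg φ h
      rwa [gF, gF, hkey, hkey] at this
    have hev : ∀ q : ZMod (2 * m) × Bool,
        (gpx m ^ (i : ℕ) * gpz m ^ (j : ℕ) * gpa m ^ (e : ℕ)) q =
        (gpx m ^ (i' : ℕ) * gpz m ^ (j' : ℕ) * gpa m ^ (e' : ℕ)) q := by
      intro q; rw [h2]
    have hbi : 2 * (i : ℕ) < 2 * m := by have := i.isLt; omega
    have hbi' : 2 * (i' : ℕ) < 2 * m := by have := i'.isLt; omega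
    have hbj : (j : ℕ) < 2 * m := j.isLt
    have hbj' : (j' : ℕ) < 2 * m := j'.isLt
    have hmod : ∀ a b : ℕ, ((a : ZMod (2 * m)) = (b : ZMod (2 * m))) →
        a ≡ b [MOD 2 * m] :=
      fun a b hab => (ZMod.natCast_eq_natCast_iff a b (2 * m)).mp hab
    have hcast : ∀ a b : ℕ, a < 2 * m → b < 2 * m →
        ((a : ZMod (2 * m)) = (b : ZMod (2 * m))) → a = b := by
      intro a b ha hb hab
      have h3 : a % (2 * m) = b % (2 * m) := hmod a b hab
      rwa [Nat.mod_eq_of_lt ha, Nat.mod_eq_of_lt hb] at h3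
    have hcancel : ∀ c a b : ℕ, a < 2 * m → b < 2 * m →
        ((c + a : ℕ) : ZMod (2 * m)) = ((c + b : ℕ) : ZMod (2 * m)) → a = b := by
      intro c a b ha hb hab
      have h1 : c + a ≡ c + b [MOD 2 * m] := hmod _ _ hab
      have h2 : a ≡ b [MOD 2 * m] := Nat.ModEq.add_left_cancel' c h1
      have h3 : a % (2 * m) = b % (2 * m) := h2
      rwa [Nat.mod_eq_of_lt ha, Nat.mod_eq_of_lt hb] at h3
    fin_cases e <;> fin_cases e' <;>
      simp only [Fin.isValue, Fin.val_zero, Fin.val_one, pow_zero, pow_one, mul_one] at hev ⊢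
    -- case e = 0, e' = 0
    · have hf1 := hev (0, false)
      have hf2 := hev (0, true)
      simp only [Equiv.Perm.mul_apply, gpz_pow, gpx_pow, Prod.mk.injEq, zero_add,
        Bool.false_eq_true, if_false, if_true, add_zero, and_true] at hf1 hf2
      have hj : (j : ℕ) = (j' : ℕ) := hcast _ _ hbj hbj' hf1
      have hi : (i : ℕ) = (i' : ℕ) := by
        have h4 : 2 * (i : ℕ) = 2 * (i' : ℕ) := by
          refine hcancel (j : ℕ) _ _ hbi hbi' ?_
          push_cast
          push_cast at hf2
          rw [hj] at hf2 ⊢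
          exact hf2
        omega
      simp [Prod.ext_iff, Fin.ext_iff, hi, hj]
    -- case e = 0, e' = 1
    · have hf1 := hev (0, false)
      simp [Equiv.Perm.mul_apply, gpz_pow, gpx_pow, gpa, Prod.ext_iff] at hf1
    -- case e = 1, e' = 0
    · have hf1 := hev (0, false)
      simp [Equiv.Perm.mul_apply, gpz_pow, gpx_pow, gpa, Prod.ext_iff] at hf1
    -- case e = 1, e' = 1
    · have hf1 := hev (0, false)
      have hf2 := hev (0, true)
      simp only [Equiv.Perm.mul_apply, gpa, Equiv.coe_fn_mk, Bool.not_false, Bool.not_true,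
        gpz_pow, gpx_pow, Prod.mk.injEq, zero_add, Bool.false_eq_true, if_false, if_true,
        add_zero, and_true] at hf1 hf2
      have hj : (j : ℕ) = (j' : ℕ) := hcast _ _ hbj hbj' hf2
      have hi : (i : ℕ) = (i' : ℕ) := by
        have h4 : 2 * (i : ℕ) = 2 * (i' : ℕ) := by
          refine hcancel (1 + (j : ℕ)) _ _ hbi hbi' ?_
          push_cast
          push_cast at hf1
          rw [hj] at hf1 ⊢
          linear_combination hf1
        omega
      simp [Prod.ext_iff, Fin.ext_iff, hi, hj]
  have hb : Function.Bijective (gF m) := ⟨hinj, hsurj⟩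
  rw [← Nat.card_eq_of_bijective (gF m) hb]
  simp [Nat.card_eq_fintype_card]
  ring
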